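/- Let G, H be m×n real matrices such that |G_{ij}| ≤ α|H_{ij}| for all i, j, and let K = diag(HᵀH). Then for any β ∈ (0,1], there exists a linear subspace W ⊆ ℝⁿ with dim(W) ≥ (1-β)n such that for all w ∈ W, wᵀGᵀGw ≤ (α²/β) · wᵀKw. -/

import Mathlib

open Matrix
theorem stmt0 (m n : ℕ) (G H : Matrix (Fin m) (Fin n) ℝ) (α β : ℝ)
    (hα : 0 < α)
    (hGH : ∀ i j, |G i j| ≤ α * |H i j|)
    (K : Matrix (Fin n) (Fin n) ℝ)
    (hK : K = Matrix.diagonal (fun j => (Hᵀ * H) j j))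
    (hβ : β ∈ Set.Ioc (0:ℝ) 1) :
    ∃ W : Submodule ℝ (Fin n → ℝ),
      (1 - β) * n ≤ (Module.finrank ℝ W : ℝ) ∧
      ∀ w ∈ W, w ⬝ᵥ ((Gᵀ * G).mulVec w) ≤ (α^2 / β) * (w ⬝ᵥ (K.mulVec w)) := by
  classical
  obtain ⟨hβ0, hβ1⟩ := hβ
  set κ : Fin n → ℝ := fun j => (Hᵀ * H) j j with hκ
  have hκ_eq : ∀ j, κ j = ∑ i, (H i j)^2 := by
    intro j; simp [hκ, Matrix.mul_apply, Matrix.transpose_apply, sq]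
  have hκ0 : ∀ j, 0 ≤ κ j := by
    intro j; rw [hκ_eq]; exact Finset.sum_nonneg fun i _ => sq_nonneg _
  have hG0 : ∀ j, κ j = 0 → ∀ i, G i j = 0 := by
    intro j hj i
    have hH : H i j = 0 := by
      have := (Finset.sum_eq_zero_iff_of_nonneg
        (fun i _ => sq_nonneg (H i j))).mp ((hκ_eq j) ▸ hj) i (Finset.mem_univ i)
      exact pow_eq_zero_iff (two_ne_zero) |>.mp this
    have := hGH i j
    rw [hH, abs_zero, mul_zero] at this
    exact abs_eq_zero.mp (le_antisymm this (abs_nonneg _))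
  set d : Fin n → ℝ := fun j => if κ j = 0 then 0 else (Real.sqrt (κ j))⁻¹ with hd
  set d' : Fin n → ℝ := fun j => Real.sqrt (κ j) with hd'
  set M : Matrix (Fin n) (Fin n) ℝ := (G * Matrix.diagonal d)ᵀ * (G * Matrix.diagonal d) with hMdef
  have hMpsd : M.PosSemidef := by
    have := Matrix.posSemidef_conjTranspose_mul_self (G * Matrix.diagonal d)
    rwa [Matrix.conjTranspose_eq_transpose_of_trivial] at this
  have hM : M.IsHermitian := hMpsd.1
  set μ : Fin n → ℝ := hM.eigenvalues with hμ
  have hμ0 : ∀ i, 0 ≤ μ i := fun i => hMpsd.eigenvalues_nonneg i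
  set U : Matrix (Fin n) (Fin n) ℝ := (hM.eigenvectorUnitary : Matrix (Fin n) (Fin n) ℝ) with hU
  have hUU : Uᵀ * U = 1 := by
    have := (Unitary.mem_iff.mp hM.eigenvectorUnitary.2).1
    rwa [← Matrix.conjTranspose_eq_transpose_of_trivial, ← Matrix.star_eq_conjTranspose]
  have hUU' : U * Uᵀ = 1 := by
    have := (Unitary.mem_iff.mp hM.eigenvectorUnitary.2).2
    rwa [← Matrix.conjTranspose_eq_transpose_of_trivial, ← Matrix.star_eq_conjTranspose]
  have hspec : M = U * Matrix.diagonal μ * Uᵀ := by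
    have := hM.spectral_theorem
    rwa [Unitary.conjStarAlgAut_apply, Matrix.star_eq_conjTranspose, Matrix.conjTranspose_eq_transpose_of_trivial,
      show (RCLike.ofReal ∘ hM.eigenvalues : Fin n → ℝ) = μ from rfl] at this
  -- diagonal entries of M are bounded by α²
  have hMjj : ∀ j, M j j ≤ α^2 := by
    intro j
    have hGD : ∀ (i : Fin m) (j : Fin n), (G * Matrix.diagonal d) i j = G i j * d j :=
      fun i j => Matrix.mul_diagonal d G i j
    have hMj : M j j = (d j)^2 * ∑ i, (G i j)^2 := by
      rw [hMdef, Matrix.mul_apply, Finset.mul_sum]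
      apply Finset.sum_congr rfl
      intro i _
      rw [Matrix.transpose_apply, hGD]
      ring
    rw [hMj]
    by_cases hj : κ j = 0
    · have hdj0 : d j = 0 := by rw [hd]; simp [hj]
      rw [hdj0]
      norm_num
      positivity
    · have hκpos : 0 < κ j := lt_of_le_of_ne (hκ0 j) (Ne.symm hj)
      have hdj : (d j)^2 = (κ j)⁻¹ := by
        simp only [hd, if_neg hj]
        rw [← Real.sqrt_inv]
        exact Real.sq_sqrt (by positivity)
      have hsum : ∑ i, (G i j)^2 ≤ α^2 * κ j := by
        rw [hκ_eq, Finset.mul_sum]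
        apply Finset.sum_le_sum
        intro i _
        have h1 : |G i j| ≤ α * |H i j| := hGH i j
        have h2 := mul_self_le_mul_self (abs_nonneg (G i j)) h1
        calc (G i j)^2 = |G i j| * |G i j| := by rw [← sq_abs, sq]
          _ ≤ (α * |H i j|) * (α * |H i j|) := h2
          _ = α^2 * (|H i j| * |H i j|) := by ring
          _ = α^2 * (H i j)^2 := by rw [abs_mul_abs_self]; ring
      rw [hdj]
      calc (κ j)⁻¹ * ∑ i, (G i j)^2 ≤ (κ j)⁻¹ * (α^2 * κ j) :=
            mul_le_mul_of_nonneg_left hsum (by positivity)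
        _ = α^2 := by field_simp
  have htrace : ∑ i, μ i ≤ α^2 * n := by
    have h1 : ∑ i, μ i = M.trace := by
      rw [hspec, Matrix.trace_mul_cycle, hUU, Matrix.one_mul, Matrix.trace_diagonal]
    rw [h1, Matrix.trace]
    calc ∑ j, M.diag j ≤ ∑ _j : Fin n, α^2 := Finset.sum_le_sum fun j _ => hMjj j
      _ = α^2 * n := by simp [mul_comm]
  -- the set of large eigenvalues is small
  set T : Finset (Fin n) := Finset.univ.filter (fun i => α^2/β < μ i) with hT
  have hTcard : (T.card : ℝ) ≤ β * n := by
    have h1 : (α^2/β) * T.card ≤ ∑ i ∈ T, μ i := by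
      have h : ∑ _i ∈ T, (α^2/β) ≤ ∑ i ∈ T, μ i :=
        Finset.sum_le_sum (fun i hi => le_of_lt (Finset.mem_filter.mp hi).2)
      rw [Finset.sum_const, nsmul_eq_mul] at h
      rw [mul_comm]
      exact h
    have h2 : ∑ i ∈ T, μ i ≤ ∑ i, μ i :=
      Finset.sum_le_sum_of_subset_of_nonneg (Finset.subset_univ T) (fun i _ _ => hμ0 i)
    have h3 : (α^2/β) * T.card ≤ α^2 * n := le_trans h1 (le_trans h2 htrace)
    have hcard : (T.card : ℝ) = ((α^2/β) * T.card) * (β/α^2) := by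
      have hα2 : α^2 ≠ 0 := by positivity
      have hβne : β ≠ 0 := ne_of_gt hβ0
      rw [mul_right_comm, div_mul_div_comm, mul_comm (α^2) β, div_self (mul_ne_zero hβne hα2), one_mul]
    rw [hcard]
    calc ((α^2/β) * T.card) * (β/α^2) ≤ (α^2 * n) * (β/α^2) :=
          mul_le_mul_of_nonneg_right h3 (by positivity)
      _ = β * n := by field_simp
  -- the linear map and subspace
  set Φ : (Fin n → ℝ) →ₗ[ℝ] ({i // i ∈ T} → ℝ) :=
    (LinearMap.funLeft ℝ ℝ (Subtype.val)).comp
      (Matrix.mulVecLin (Uᵀ * Matrix.diagonal d')) with hΦ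
  refine ⟨LinearMap.ker Φ, ?_, ?_⟩
  · -- dimension bound
    have hrn := LinearMap.finrank_range_add_finrank_ker Φ
    have hrange : Module.finrank ℝ (LinearMap.range Φ) ≤ T.card := by
      calc Module.finrank ℝ (LinearMap.range Φ) ≤ Module.finrank ℝ ({i // i ∈ T} → ℝ) :=
            Submodule.finrank_le _
        _ = T.card := by simp [Module.finrank_pi]
    have hdom : Module.finrank ℝ (Fin n → ℝ) = n := by simp
    have : (n : ℝ) ≤ Module.finrank ℝ (LinearMap.range Φ) +
        Module.finrank ℝ (LinearMap.ker Φ) := by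
      rw [← Nat.cast_add, hrn, hdom]
    have h4 : (n : ℝ) - T.card ≤ Module.finrank ℝ (LinearMap.ker Φ) := by
      have : (Module.finrank ℝ (LinearMap.range Φ) : ℝ) ≤ T.card := by exact_mod_cast hrange
      linarith
    nlinarith [hTcard]
  · -- the quadratic form bound
    intro w hw
    set u : Fin n → ℝ := (Matrix.diagonal d').mulVec w with hu
    set y : Fin n → ℝ := Uᵀ.mulVec u with hy
    have hyT : ∀ i : Fin n, i ∈ T → y i = 0 := by
      intro i hi
      have h0 : Φ w = 0 := LinearMap.mem_ker.mp hw
      have h1 : ((Uᵀ * Matrix.diagonal d') *ᵥ w) i = 0 := congrFun h0 ⟨i, hi⟩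
      rw [hy, hu, Matrix.mulVec_mulVec]
      exact h1
    -- G *ᵥ w = (G * diagonal d) *ᵥ u
    have hGw : G.mulVec w = (G * Matrix.diagonal d).mulVec u := by
      have hGdd : G * Matrix.diagonal (fun j => d j * d' j) = G := by
        ext i j
        rw [Matrix.mul_diagonal]
        by_cases hj : κ j = 0
        · rw [hG0 j hj i]; ring
        · have hκpos : 0 < κ j := lt_of_le_of_ne (hκ0 j) (Ne.symm hj)
          have h1 : d j * d' j = 1 := by
            rw [hd, hd']
            simp only [if_neg hj]
            exact inv_mul_cancel₀ (by positivity : Real.sqrt (κ j) ≠ 0)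
          rw [h1, mul_one]
      rw [hu, Matrix.mulVec_mulVec, Matrix.mul_assoc, Matrix.diagonal_mul_diagonal, hGdd]
    -- LHS = y ⬝ᵥ (diagonal μ *ᵥ y)
    have hLHS : w ⬝ᵥ ((Gᵀ * G).mulVec w) = ∑ i, μ i * (y i)^2 := by
      have e1 : w ⬝ᵥ ((Gᵀ * G).mulVec w) = (G.mulVec w) ⬝ᵥ (G.mulVec w) := by
        rw [← Matrix.mulVec_mulVec, Matrix.dotProduct_mulVec, Matrix.vecMul_transpose]
      have e2 : u ⬝ᵥ (M.mulVec u) = (G.mulVec w) ⬝ᵥ (G.mulVec w) := by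
        rw [hMdef, ← Matrix.mulVec_mulVec, Matrix.dotProduct_mulVec, Matrix.vecMul_transpose,
          hGw]
      have huy : u ᵥ* U = y := by rw [hy, Matrix.mulVec_transpose]
      have e3 : u ⬝ᵥ (M.mulVec u) = y ⬝ᵥ ((Matrix.diagonal μ).mulVec y) := by
        rw [hspec, ← Matrix.mulVec_mulVec, ← Matrix.mulVec_mulVec, Matrix.dotProduct_mulVec,
          huy, ← hy]
      have e4 : y ⬝ᵥ ((Matrix.diagonal μ).mulVec y) = ∑ i, μ i * (y i)^2 := by
        simp only [dotProduct, Matrix.mulVec_diagonal]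
        apply Finset.sum_congr rfl
        intro i _; ring
      rw [e1, ← e2, e3, e4]
    -- RHS
    have hRHS : w ⬝ᵥ (K.mulVec w) = ∑ i, (y i)^2 := by
      have e5 : ∑ i, (y i)^2 = y ⬝ᵥ y := by
        simp only [dotProduct, sq]
      have e6 : y ⬝ᵥ y = u ⬝ᵥ u := by
        rw [hy, Matrix.dotProduct_mulVec, Matrix.vecMul_transpose, Matrix.mulVec_mulVec, hUU',
          Matrix.one_mulVec]
      have e7 : u ⬝ᵥ u = w ⬝ᵥ (K.mulVec w) := by
        rw [hu, hK]
        simp only [dotProduct, Matrix.mulVec_diagonal]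
        apply Finset.sum_congr rfl
        intro j _
        have hsq : d' j * d' j = κ j := by
          rw [hd']; exact Real.mul_self_sqrt (hκ0 j)
        calc d' j * w j * (d' j * w j) = (d' j * d' j) * (w j * w j) := by ring
          _ = κ j * (w j * w j) := by rw [hsq]
          _ = w j * (κ j * w j) := by ring
      rw [e5, e6, e7]
    rw [hLHS, hRHS, Finset.mul_sum]
    apply Finset.sum_le_sum
    intro i _
    by_cases hi : i ∈ T
    · rw [hyT i hi]; simp
    · have hμi : μ i ≤ α^2/β := by
        by_contra hcon
        exact hi (Finset.mem_filter.mpr ⟨Finset.mem_univ i, lt_of_not_ge hcon⟩)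
      exact mul_le_mul_of_nonneg_right hμi (sq_nonneg _)
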